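/- Let s ≤ t, let A, K : ℝ → Matrix (Fin n) (Fin n) ℝ be continuous on [s,t], and let h, g ∈ ℝ^n. Suppose z_h, z_g : ℝ → ℝ^n solve the forward linear ODE z'(τ) = −A(τ).mulVec z(τ) on [s,t] with z_h(s) = h and z_g(s) = g, and suppose m : ℝ → ℝ^n solves the backward equation m'(τ) = A(τ)ᵀ.mulVec m(τ) − K(τ).mulVec z_h(τ) on [s,t] with terminal condition m(t) = 0. Then ⟨m(s), g⟩ = ∫_{s}^{t} ⟨ K(τ).mulVec z_h(τ), z_g(τ) ⟩ dτ, where ⟨·,·⟩ is the Euclidean inner product on ℝ^n. -/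

import Mathlib

open MeasureTheory Matrix

theorem dotProduct_hasDerivAt {n : ℕ} (f g : ℝ → Fin n → ℝ) (f' g' : Fin n → ℝ) (τ : ℝ)
    (hf : HasDerivAt f f' τ) (hg : HasDerivAt g g' τ) :
    HasDerivAt (fun x => f x ⬝ᵥ g x) (f' ⬝ᵥ g τ + f τ ⬝ᵥ g') τ := by
  have hfi : ∀ i, HasDerivAt (fun x => f x i) (f' i) τ := fun i => (hasDerivAt_pi.mp hf) i
  have hgi : ∀ i, HasDerivAt (fun x => g x i) (g' i) τ := fun i => (hasDerivAt_pi.mp hg) i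
  have : HasDerivAt (fun x => ∑ i, f x i * g x i)
      (∑ i, (f' i * g τ i + f τ i * g' i)) τ :=
    HasDerivAt.fun_sum (fun i _ => (hfi i).mul (hgi i))
  simpa [dotProduct, Finset.sum_add_distrib] using this

/-- **Dual transfer (bilinear form).** If `z_h, z_g` solve the forward linear ODE
`z' = −A(τ) z` with `z_h(s) = h`, `z_g(s) = g`, and `m` solves the backward equation
`m' = A(τ)ᵀ m − K(τ) z_h` with `m(t) = 0`, then
`⟨m(s), g⟩ = ∫_s^t ⟨K(τ) z_h(τ), z_g(τ)⟩ dτ`. -/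
theorem dual_transfer_bilinear {n : ℕ} (s t : ℝ) (hst : s ≤ t)
    (A K : ℝ → Matrix (Fin n) (Fin n) ℝ)
    (hA : ∀ i j, ContinuousOn (fun τ => A τ i j) (Set.Icc s t))
    (hK : ∀ i j, ContinuousOn (fun τ => K τ i j) (Set.Icc s t))
    (h g : Fin n → ℝ)
    (zh zg m : ℝ → Fin n → ℝ)
    (hzh : ∀ τ ∈ Set.Icc s t, HasDerivAt zh (-(A τ).mulVec (zh τ)) τ)
    (hzg : ∀ τ ∈ Set.Icc s t, HasDerivAt zg (-(A τ).mulVec (zg τ)) τ)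
    (hzh0 : zh s = h) (hzg0 : zg s = g)
    (hm : ∀ τ ∈ Set.Icc s t,
      HasDerivAt m ((A τ)ᵀ.mulVec (m τ) - (K τ).mulVec (zh τ)) τ)
    (hmt : m t = 0) :
    m s ⬝ᵥ g = ∫ τ in s..t, (K τ).mulVec (zh τ) ⬝ᵥ zg τ := by
  have hIcc : Set.uIcc s t = Set.Icc s t := Set.uIcc_of_le hst
  -- derivative of F = ⟨m, zg⟩
  have hF : ∀ τ ∈ Set.uIcc s t,
      HasDerivAt (fun x => m x ⬝ᵥ zg x) (-((K τ).mulVec (zh τ) ⬝ᵥ zg τ)) τ := by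
    intro τ hτ
    rw [hIcc] at hτ
    have := dotProduct_hasDerivAt m zg _ _ τ (hm τ hτ) (hzg τ hτ)
    have key : ((A τ)ᵀ.mulVec (m τ) - (K τ).mulVec (zh τ)) ⬝ᵥ zg τ
        + m τ ⬝ᵥ (-(A τ).mulVec (zg τ)) = -((K τ).mulVec (zh τ) ⬝ᵥ zg τ) := by
      rw [sub_dotProduct, dotProduct_neg, Matrix.dotProduct_mulVec,
        Matrix.mulVec_transpose]
      ring
    rw [key] at this
    exact this
  -- continuity / integrability of the integrand
  have hzhC : ContinuousOn zh (Set.Icc s t) := fun τ hτ => ((hzh τ hτ).continuousAt).continuousWithinAt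
  have hzgC : ContinuousOn zg (Set.Icc s t) := fun τ hτ => ((hzg τ hτ).continuousAt).continuousWithinAt
  have hKC : ContinuousOn K (Set.Icc s t) := by
    apply continuousOn_pi.mpr; intro i; exact continuousOn_pi.mpr fun j => hK i j
  have hint : ContinuousOn (fun τ => (K τ).mulVec (zh τ) ⬝ᵥ zg τ) (Set.Icc s t) := by
    have hzhc : ∀ j, ContinuousOn (fun τ => zh τ j) (Set.Icc s t) :=
      fun j => continuousOn_pi.mp hzhC j
    have hzgc : ∀ j, ContinuousOn (fun τ => zg τ j) (Set.Icc s t) :=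
      fun j => continuousOn_pi.mp hzgC j
    simp only [Matrix.mulVec, dotProduct]
    exact continuousOn_finset_sum _ fun i _ =>
      (continuousOn_finset_sum _ fun j _ => (hK i j).mul (hzhc j)).mul (hzgc i)
  have hint' : IntervalIntegrable (fun τ => -((K τ).mulVec (zh τ) ⬝ᵥ zg τ)) volume s t :=
    ((hint.neg).mono hIcc.subset).intervalIntegrable
  have := intervalIntegral.integral_eq_sub_of_hasDerivAt hF hint'
  rw [hmt, intervalIntegral.integral_neg] at this
  simp only [zero_dotProduct, zero_sub, neg_inj] at this
  rw [← hzg0, this]
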